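/- Let c > 0, b ≥ 0 and T > 0, let (λ_n)_{n≥0} be a sequence of nonnegative reals with |λ_n − c n²| ≤ b for all n, and let (a_n)_{n≥0} be a real sequence with ∑_n a_n² < ∞. Then for each t ∈ [0,T) the series G(t) := ∑_{n=0}^∞ a_n e^{λ_n (t−T)} converges absolutely, and the resulting function G belongs to L²(0,T); moreover |G(t)|² ≤ A' / √(T−t) for some constant A' > 0 and all t ∈ [0,T). -/

import Mathlib

open MeasureTheory Set Real

lemma gauss_summable {α : ℝ} (hα : 0 < α) :
    Summable (fun n : ℕ => Real.exp (-α * (n:ℝ) ^ 2)) := by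
  apply Summable.of_nonneg_of_le (fun n => (Real.exp_pos _).le)
    (f := fun n : ℕ => Real.exp (-α) ^ n)
  · intro n
    rw [← Real.exp_nat_mul]
    apply Real.exp_le_exp.2
    have h1 : (n:ℝ) ≤ (n:ℝ)^2 := by exact_mod_cast Nat.le_self_pow two_ne_zero n
    nlinarith
  · exact summable_geometric_of_lt_one (Real.exp_pos _).le (Real.exp_lt_one_iff.2 (by linarith))

lemma gauss_sum_le {α : ℝ} (hα : 0 < α) :
    ∑' n : ℕ, Real.exp (-α * (n:ℝ) ^ 2) ≤ 1 + Real.sqrt (π / α) / 2 := by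
  rw [Summable.tsum_eq_zero_add (gauss_summable hα)]
  simp only [Nat.cast_zero, zero_pow, mul_zero, Real.exp_zero]
  gcongr
  · norm_num
  apply Real.tsum_le_of_sum_range_le (fun n => (Real.exp_pos _).le)
  intro N
  have hanti : AntitoneOn (fun x : ℝ => Real.exp (-α * x ^ 2)) (Icc (0:ℝ) (0 + N)) := by
    intro x hx y hy hxy
    have h1 : (0:ℝ) ≤ y + x := by have := hx.1; linarith
    have h2 : (0:ℝ) ≤ (y - x) * (y + x) := mul_nonneg (by linarith) h1
    exact Real.exp_le_exp.2 (by nlinarith)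
  have h1 := hanti.sum_le_integral
  have h2 : ∫ x in (0:ℝ)..(0 + (N:ℝ)), Real.exp (-α * x ^ 2)
      ≤ ∫ x in Ioi (0:ℝ), Real.exp (-α * x ^ 2) := by
    rw [intervalIntegral.integral_of_le (by positivity)]
    apply setIntegral_mono_set ((integrable_exp_neg_mul_sq hα).integrableOn)
    · exact Filter.Eventually.of_forall fun x => (Real.exp_pos _).le
    · exact Filter.Eventually.of_forall Ioc_subset_Ioi_self
  rw [integral_gaussian_Ioi] at h2
  refine le_trans (le_of_eq ?_) (h1.trans h2)
  apply Finset.sum_congr rfl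
  intro i _
  push_cast
  ring_nf

theorem exp_series_memL2
    (c b T : ℝ) (hc : 0 < c) (hb : 0 ≤ b) (hT : 0 < T)
    (lam : ℕ → ℝ) (hlam : ∀ n, 0 ≤ lam n)
    (happrox : ∀ n, |lam n - c * (n : ℝ) ^ 2| ≤ b)
    (a : ℕ → ℝ) (ha : Summable (fun n => (a n) ^ 2)) :
    (∀ t ∈ Ico (0:ℝ) T, Summable (fun n => |a n * Real.exp (lam n * (t - T))|)) ∧
    MemLp (fun t => ∑' n, a n * Real.exp (lam n * (t - T))) 2
      (volume.restrict (Ioo 0 T)) ∧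
    ∃ A' > (0:ℝ), ∀ t ∈ Ico (0:ℝ) T,
      (∑' n, a n * Real.exp (lam n * (t - T))) ^ 2 ≤ A' / Real.sqrt (T - t) := by
  set S : ℝ := ∑' n, (a n) ^ 2 with hS
  have hS0 : 0 ≤ S := tsum_nonneg fun n => sq_nonneg _
  set K : ℝ := Real.exp (2*b*T) * (Real.sqrt T + Real.sqrt (π/(2*c)) / 2) with hK
  have hK0 : 0 < K := by
    have h1 : 0 < Real.sqrt T := Real.sqrt_pos.2 hT
    have h2 : 0 ≤ Real.sqrt (π/(2*c)) := Real.sqrt_nonneg _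
    have h3 : 0 < Real.exp (2*b*T) := Real.exp_pos _
    positivity
  set A' : ℝ := S * K + 1 with hA'
  have hA'0 : 0 < A' := by positivity
  -- per-term bound on squared exponentials
  have hterm : ∀ t ∈ Ico (0:ℝ) T, ∀ n : ℕ,
      (Real.exp (lam n * (t - T))) ^ 2
        ≤ Real.exp (2*b*(T-t)) * Real.exp (-(2*c*(T-t)) * (n:ℝ)^2) := by
    intro t ht n
    have hs : 0 < T - t := by linarith [ht.2]
    have hl : -b ≤ lam n - c * (n:ℝ)^2 := (abs_le.1 (happrox n)).1
    rw [sq, ← Real.exp_add, ← Real.exp_add]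
    apply Real.exp_le_exp.2
    nlinarith [mul_nonneg hs.le (by linarith : (0:ℝ) ≤ lam n - c*(n:ℝ)^2 + b)]
  -- summability of the squared exponentials
  have hE2sum : ∀ t ∈ Ico (0:ℝ) T,
      Summable (fun n => (Real.exp (lam n * (t - T))) ^ 2) := by
    intro t ht
    have hs : 0 < T - t := by linarith [ht.2]
    exact Summable.of_nonneg_of_le (fun n => sq_nonneg _) (hterm t ht)
      ((gauss_summable (by positivity : (0:ℝ) < 2*c*(T-t))).mul_left _)
  -- bound on the sum of squared exponentials
  have hE2bd : ∀ t ∈ Ico (0:ℝ) T,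
      ∑' n, (Real.exp (lam n * (t - T))) ^ 2 ≤ K / Real.sqrt (T - t) := by
    intro t ht
    have hs : 0 < T - t := by linarith [ht.2]
    have hαpos : (0:ℝ) < 2*c*(T-t) := by positivity
    have hsqs : 0 < Real.sqrt (T - t) := Real.sqrt_pos.2 hs
    have step1 : ∑' n, (Real.exp (lam n * (t - T))) ^ 2
        ≤ Real.exp (2*b*(T-t)) * ∑' n : ℕ, Real.exp (-(2*c*(T-t)) * (n:ℝ)^2) := by
      rw [← tsum_mul_left]
      exact Summable.tsum_le_tsum (hterm t ht) (hE2sum t ht)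
        ((gauss_summable hαpos).mul_left _)
    have step2 : ∑' n : ℕ, Real.exp (-(2*c*(T-t)) * (n:ℝ)^2)
        ≤ 1 + Real.sqrt (π/(2*c*(T-t))) / 2 := gauss_sum_le hαpos
    have hfrac : 1 + Real.sqrt (π/(2*c*(T-t))) / 2
        ≤ (Real.sqrt T + Real.sqrt (π/(2*c)) / 2) / Real.sqrt (T - t) := by
      have h1 : Real.sqrt (π/(2*c*(T-t)))
          = Real.sqrt (π/(2*c)) / Real.sqrt (T-t) := by
        rw [show π/(2*c*(T-t)) = π/(2*c)/(T-t) from (div_div _ _ _).symm,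
          Real.sqrt_div (by positivity)]
      have h2 : 1 ≤ Real.sqrt T / Real.sqrt (T - t) :=
        (one_le_div hsqs).2 (Real.sqrt_le_sqrt (by linarith [ht.1]))
      rw [h1]
      have h3 : (Real.sqrt T + Real.sqrt (π/(2*c)) / 2) / Real.sqrt (T - t)
          = Real.sqrt T / Real.sqrt (T-t) + (Real.sqrt (π/(2*c)) / Real.sqrt (T-t)) / 2 := by
        field_simp
      rw [h3]
      linarith
    calc ∑' n, (Real.exp (lam n * (t - T))) ^ 2
        ≤ Real.exp (2*b*(T-t)) * (1 + Real.sqrt (π/(2*c*(T-t))) / 2) := by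
          refine step1.trans ?_
          exact mul_le_mul_of_nonneg_left step2 (Real.exp_pos _).le
      _ ≤ Real.exp (2*b*T) * ((Real.sqrt T + Real.sqrt (π/(2*c)) / 2) / Real.sqrt (T - t)) := by
          apply mul_le_mul (Real.exp_le_exp.2 (by nlinarith [ht.1])) hfrac
            (by positivity) (Real.exp_pos _).le
      _ = K / Real.sqrt (T - t) := by rw [hK, mul_div_assoc]
  -- part 1 : absolute convergence
  have part1 : ∀ t ∈ Ico (0:ℝ) T,
      Summable (fun n => |a n * Real.exp (lam n * (t - T))|) := by
    intro t ht
    apply Summable.of_nonneg_of_le (fun n => abs_nonneg _)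
      (f := fun n => ((a n)^2 + (Real.exp (lam n * (t - T)))^2) / 2)
    · intro n
      have he : 0 < Real.exp (lam n * (t - T)) := Real.exp_pos _
      rw [abs_mul, abs_of_pos he]
      nlinarith [sq_nonneg (|a n| - Real.exp (lam n * (t - T))), sq_abs (a n),
        abs_nonneg (a n)]
    · exact (ha.add (hE2sum t ht)).div_const 2
  -- part 3 : pointwise bound
  have part3 : ∀ t ∈ Ico (0:ℝ) T,
      (∑' n, a n * Real.exp (lam n * (t - T))) ^ 2 ≤ A' / Real.sqrt (T - t) := by
    intro t ht
    have hs : 0 < T - t := by linarith [ht.2]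
    have hsqs : 0 < Real.sqrt (T - t) := Real.sqrt_pos.2 hs
    set E : ℝ := ∑' n, (Real.exp (lam n * (t - T))) ^ 2 with hE
    have hE0 : 0 ≤ E := tsum_nonneg fun n => sq_nonneg _
    have hCS : ∑' n, |a n * Real.exp (lam n * (t - T))|
        ≤ Real.sqrt S * Real.sqrt E := by
      apply Summable.tsum_le_of_sum_le (part1 t ht)
      intro F
      calc ∑ n ∈ F, |a n * Real.exp (lam n * (t - T))|
          = ∑ n ∈ F, |a n| * Real.exp (lam n * (t - T)) := by
            refine Finset.sum_congr rfl fun n _ => ?_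
            rw [abs_mul, abs_of_pos (Real.exp_pos _)]
        _ ≤ Real.sqrt (∑ n ∈ F, |a n| ^ 2)
            * Real.sqrt (∑ n ∈ F, (Real.exp (lam n * (t - T))) ^ 2) :=
            Real.sum_mul_le_sqrt_mul_sqrt F _ _
        _ ≤ Real.sqrt S * Real.sqrt E := by
            apply mul_le_mul
            · apply Real.sqrt_le_sqrt
              simp only [sq_abs]
              exact Summable.sum_le_tsum F (fun n _ => sq_nonneg _) ha
            · exact Real.sqrt_le_sqrt
                (Summable.sum_le_tsum F (fun n _ => sq_nonneg _) (hE2sum t ht))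
            · exact Real.sqrt_nonneg _
            · exact Real.sqrt_nonneg _
    have hsum' : Summable (fun n => ‖a n * Real.exp (lam n * (t - T))‖) := by
      simpa only [Real.norm_eq_abs] using part1 t ht
    have habs : |∑' n, a n * Real.exp (lam n * (t - T))|
        ≤ ∑' n, |a n * Real.exp (lam n * (t - T))| := by
      simpa only [Real.norm_eq_abs] using norm_tsum_le_tsum_norm hsum'
    calc (∑' n, a n * Real.exp (lam n * (t - T))) ^ 2
        = |∑' n, a n * Real.exp (lam n * (t - T))| ^ 2 := (sq_abs _).symm
      _ ≤ (Real.sqrt S * Real.sqrt E) ^ 2 := by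
          apply pow_le_pow_left₀ (abs_nonneg _) (habs.trans hCS)
      _ = S * E := by
          rw [mul_pow, Real.sq_sqrt hS0, Real.sq_sqrt hE0]
      _ ≤ S * (K / Real.sqrt (T - t)) :=
          mul_le_mul_of_nonneg_left (hE2bd t ht) hS0
      _ ≤ A' / Real.sqrt (T - t) := by
          rw [mul_div_assoc']
          refine (div_le_div_iff_of_pos_right hsqs).2 ?_
          rw [hA']; linarith
  refine ⟨part1, ?_, ⟨A', hA'0, part3⟩⟩
  -- L² membership
  have hmeas : AEStronglyMeasurable (fun t => ∑' n, a n * Real.exp (lam n * (t - T)))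
      (volume.restrict (Ioo 0 T)) := by
    apply aestronglyMeasurable_of_tendsto_ae (u := Filter.atTop)
      (f := fun N t => ∑ n ∈ Finset.range N, a n * Real.exp (lam n * (t - T)))
    · intro N
      apply Continuous.aestronglyMeasurable
      exact continuous_finset_sum _ fun n _ => continuous_const.mul
        (Real.continuous_exp.comp (continuous_const.mul (continuous_id.sub continuous_const)))
    · filter_upwards [ae_restrict_mem measurableSet_Ioo] with t ht
      exact ((part1 t ⟨ht.1.le, ht.2⟩).of_abs).hasSum.tendsto_sum_nat
  have hIb : Integrable (fun t : ℝ => A' * (T - t) ^ (-(1/2):ℝ))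
      (volume.restrict (Ioo 0 T)) := by
    have h1 : IntervalIntegrable (fun x : ℝ => x ^ (-(1/2):ℝ)) volume 0 T :=
      intervalIntegral.intervalIntegrable_rpow' (by norm_num)
    have h2 := (h1.comp_sub_left T).symm
    rw [intervalIntegrable_iff] at h2
    have h3 : Ioo (0:ℝ) T ⊆ Set.uIoc (T - T) (T - 0) := by
      simp only [sub_self, sub_zero]
      rw [Set.uIoc_of_le hT.le]
      exact Ioo_subset_Ioc_self
    exact (h2.mono_set h3).const_mul A'
  have hbd : ∀ᵐ t ∂(volume.restrict (Ioo 0 T)),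
      ‖(∑' n, a n * Real.exp (lam n * (t - T))) ^ 2‖ ≤ A' * (T - t) ^ (-(1/2):ℝ) := by
    filter_upwards [ae_restrict_mem measurableSet_Ioo] with t ht
    have hs : 0 < T - t := by linarith [ht.2]
    rw [Real.norm_eq_abs, abs_of_nonneg (sq_nonneg _)]
    calc (∑' n, a n * Real.exp (lam n * (t - T))) ^ 2
        ≤ A' / Real.sqrt (T - t) := part3 t ⟨ht.1.le, ht.2⟩
      _ = A' * (T - t) ^ (-(1/2):ℝ) := by
          rw [Real.rpow_neg hs.le, ← Real.sqrt_eq_rpow, div_eq_mul_inv]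
  have hsq : Integrable (fun t => (∑' n, a n * Real.exp (lam n * (t - T))) ^ 2)
      (volume.restrict (Ioo 0 T)) :=
    Integrable.mono' hIb ((hmeas.mul hmeas).congr (Filter.Eventually.of_forall fun t => (sq _).symm)) hbd
  exact (memLp_two_iff_integrable_sq hmeas).2 hsq
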